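/- The equilibrium (r₀, r₀, π) with r₀ = √(Φ/(4Ω₀+Φ)) of the reduced vortex dipole system (in variables r₁, r₂, θ) is Lyapunov stable: the conserved function H attains a strict local minimum there. -/

import Mathlib

open Topology

/-- The reduced Hamiltonian as a function on `ℝ × ℝ × ℝ`. -/
noncomputable def HredP (Ω₀ Φ : ℝ) (p : ℝ × ℝ × ℝ) : ℝ :=
  -(1 / 2) * (Ω₀ * Real.log (1 - p.1 ^ 2) + Ω₀ * Real.log (1 - p.2.1 ^ 2)
    + (Φ / 2) * Real.log (p.1 ^ 2 + p.2.1 ^ 2 - 2 * p.1 * p.2.1 * Real.cos p.2.2))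

lemma log_gap (a b : ℝ) (ha : 0 < a) (hb : 0 < b) :
    (a - b) / a ≤ Real.log a - Real.log b := by
  have h := Real.log_le_sub_one_of_pos (div_pos hb ha)
  rw [Real.log_div hb.ne' ha.ne'] at h
  have h2 : (a - b) / a = 1 - b / a := by field_simp
  linarith

set_option maxHeartbeats 1000000 in
lemma key_ineq (Ω₀ Φ r₀ : ℝ) (hΩ₀ : 0 < Ω₀) (hΦ : 0 < Φ)
    (h0 : 0 < r₀) (h0' : r₀ < 1) (hkey : Φ * (1 - r₀ ^ 2) = 4 * Ω₀ * r₀ ^ 2)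
    (r₁ r₂ θ : ℝ) (h1 : 0 < r₁) (h1' : r₁ < 1) (h2 : 0 < r₂) (h2' : r₂ < 1)
    (hc : Real.cos θ ≤ 0)
    (hstr : ¬(r₁ = r₀ ∧ r₂ = r₀) ∨ -1 < Real.cos θ) :
    HredP Ω₀ Φ (r₀, r₀, Real.pi) < HredP Ω₀ Φ (r₁, r₂, θ) := by
  have hden : (0:ℝ) < 1 - r₀ ^ 2 := by nlinarith
  have hd1 : (0:ℝ) < 1 - r₁ ^ 2 := by nlinarith
  have hd2 : (0:ℝ) < 1 - r₂ ^ 2 := by nlinarith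
  have hr12 : 0 < r₁ * r₂ := mul_pos h1 h2
  have hspos : 0 < r₁ ^ 2 + r₂ ^ 2 - 2 * r₁ * r₂ * Real.cos θ := by
    nlinarith [mul_nonneg hr12.le (neg_nonneg.mpr hc)]
  have hcos1 : -1 ≤ Real.cos θ := Real.neg_one_le_cos θ
  have hsum : 0 < r₁ + r₂ := by linarith
  have hsle : r₁ ^ 2 + r₂ ^ 2 - 2 * r₁ * r₂ * Real.cos θ ≤ (r₁ + r₂) ^ 2 := by nlinarith
  -- abbreviations
  set L0 := Real.log (1 - r₀ ^ 2) with hL0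
  set L1 := Real.log (1 - r₁ ^ 2) with hL1
  set L2 := Real.log (1 - r₂ ^ 2) with hL2
  set c := Ω₀ / (1 - r₀ ^ 2) with hc'
  have hcpos : 0 < c := div_pos hΩ₀ hden
  have hΦeq : Φ = 4 * Ω₀ * r₀ ^ 2 / (1 - r₀ ^ 2) := by
    field_simp
    linarith [hkey]
  have g1 : c * (r₁ ^ 2 - r₀ ^ 2) ≤ Ω₀ * (L0 - L1) := by
    have h := log_gap (1 - r₀ ^ 2) (1 - r₁ ^ 2) hden hd1
    have heq : c * (r₁ ^ 2 - r₀ ^ 2) = Ω₀ * ((1 - r₀ ^ 2 - (1 - r₁ ^ 2)) / (1 - r₀ ^ 2)) := by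
      rw [hc']; field_simp; ring
    rw [heq]
    exact mul_le_mul_of_nonneg_left h hΩ₀.le
  have g2 : c * (r₂ ^ 2 - r₀ ^ 2) ≤ Ω₀ * (L0 - L2) := by
    have h := log_gap (1 - r₀ ^ 2) (1 - r₂ ^ 2) hden hd2
    have heq : c * (r₂ ^ 2 - r₀ ^ 2) = Ω₀ * ((1 - r₀ ^ 2 - (1 - r₂ ^ 2)) / (1 - r₀ ^ 2)) := by
      rw [hc']; field_simp; ring
    rw [heq]
    exact mul_le_mul_of_nonneg_left h hΩ₀.le
  have g3 : Φ * ((2 * r₀ - (r₁ + r₂)) / (2 * r₀)) ≤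
      Φ * (Real.log (2 * r₀) - Real.log (r₁ + r₂)) :=
    mul_le_mul_of_nonneg_left (log_gap (2 * r₀) (r₁ + r₂) (by linarith) hsum) hΦ.le
  have hid : c * (r₁ ^ 2 - r₀ ^ 2) + c * (r₂ ^ 2 - r₀ ^ 2)
      + Φ * ((2 * r₀ - (r₁ + r₂)) / (2 * r₀))
      = c * ((r₁ - r₀) ^ 2 + (r₂ - r₀) ^ 2) := by
    rw [hΦeq, hc']; field_simp; ring
  -- log of squared sum
  have e2 : Real.log ((r₁ + r₂) ^ 2) = 2 * Real.log (r₁ + r₂) := by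
    rw [Real.log_pow]; push_cast; ring
  have hlog : Real.log (r₁ ^ 2 + r₂ ^ 2 - 2 * r₁ * r₂ * Real.cos θ)
      ≤ 2 * Real.log (r₁ + r₂) := by
    rw [← e2]; exact Real.log_le_log hspos hsle
  -- goal reduction
  have e1 : Real.log (r₀ ^ 2 + r₀ ^ 2 - 2 * r₀ * r₀ * Real.cos Real.pi)
      = 2 * Real.log (2 * r₀) := by
    rw [Real.cos_pi, show r₀ ^ 2 + r₀ ^ 2 - 2 * r₀ * r₀ * (-1) = (2 * r₀) ^ 2 by ring,
      Real.log_pow]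
    push_cast; ring
  simp only [HredP]
  rw [e1]
  rcases hstr with hne | hcg
  · have hq : 0 < (r₁ - r₀) ^ 2 + (r₂ - r₀) ^ 2 := by
      have : r₁ ≠ r₀ ∨ r₂ ≠ r₀ := by tauto
      rcases this with h | h
      · have h' : r₁ - r₀ ≠ 0 := sub_ne_zero.mpr h
        have := lt_of_le_of_ne (sq_nonneg (r₁ - r₀)) (Ne.symm (pow_ne_zero 2 h'))
        linarith [sq_nonneg (r₂ - r₀)]
      · have h' : r₂ - r₀ ≠ 0 := sub_ne_zero.mpr h
        have := lt_of_le_of_ne (sq_nonneg (r₂ - r₀)) (Ne.symm (pow_ne_zero 2 h'))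
        linarith [sq_nonneg (r₁ - r₀)]
    have hqpos : 0 < c * ((r₁ - r₀) ^ 2 + (r₂ - r₀) ^ 2) := mul_pos hcpos hq
    have hm : Φ / 2 * Real.log (r₁ ^ 2 + r₂ ^ 2 - 2 * r₁ * r₂ * Real.cos θ)
        ≤ Φ / 2 * (2 * Real.log (r₁ + r₂)) :=
      mul_le_mul_of_nonneg_left hlog (by linarith)
    linarith [hm, g1, g2, g3, hid, hqpos]
  · have hslt : r₁ ^ 2 + r₂ ^ 2 - 2 * r₁ * r₂ * Real.cos θ < (r₁ + r₂) ^ 2 := by nlinarith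
    have hlog' : Real.log (r₁ ^ 2 + r₂ ^ 2 - 2 * r₁ * r₂ * Real.cos θ)
        < 2 * Real.log (r₁ + r₂) := by
      rw [← e2]; exact Real.log_lt_log hspos hslt
    have hqnn : 0 ≤ c * ((r₁ - r₀) ^ 2 + (r₂ - r₀) ^ 2) := by positivity
    have hm : Φ / 2 * Real.log (r₁ ^ 2 + r₂ ^ 2 - 2 * r₁ * r₂ * Real.cos θ)
        < Φ / 2 * (2 * Real.log (r₁ + r₂)) :=
      mul_lt_mul_of_pos_left hlog' (show (0:ℝ) < Φ / 2 by linarith)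
    linarith [hm, g1, g2, g3, hid, hqnn]

/-- the equilibrium `(r₀, r₀, π)` with `r₀ = √(Φ/(4Ω₀+Φ))` is
Lyapunov stable: the conserved function `H` attains a strict local minimum
there. -/
theorem stationary_equilibrium_strict_local_min
    (Ω₀ Φ : ℝ) (hΩ₀ : 0 < Ω₀) (hΦ : 0 < Φ)
    (r₀ : ℝ) (hr₀ : r₀ = Real.sqrt (Φ / (4 * Ω₀ + Φ))) :
    ∀ᶠ p in 𝓝[≠] ((r₀, r₀, Real.pi) : ℝ × ℝ × ℝ),
      HredP Ω₀ Φ (r₀, r₀, Real.pi) < HredP Ω₀ Φ p := by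
  have hden : 0 < 4 * Ω₀ + Φ := by linarith
  have hfracpos : 0 < Φ / (4 * Ω₀ + Φ) := div_pos hΦ hden
  have h0 : 0 < r₀ := hr₀ ▸ Real.sqrt_pos.mpr hfracpos
  have hsq : r₀ ^ 2 = Φ / (4 * Ω₀ + Φ) := by
    rw [hr₀, Real.sq_sqrt hfracpos.le]
  have hfrac1 : Φ / (4 * Ω₀ + Φ) < 1 := by
    rw [div_lt_one hden]; linarith
  have h0' : r₀ < 1 := by nlinarith [hsq, hfrac1]
  have hkey : Φ * (1 - r₀ ^ 2) = 4 * Ω₀ * r₀ ^ 2 := by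
    rw [hsq]; field_simp; ring
  have hπ : (0:ℝ) < Real.pi := Real.pi_pos
  set S : Set (ℝ × ℝ × ℝ) :=
    Set.Ioo (0:ℝ) 1 ×ˢ Set.Ioo (0:ℝ) 1 ×ˢ Set.Ioo (Real.pi / 2) (Real.pi + Real.pi / 2)
    with hS
  have hopen : IsOpen S := isOpen_Ioo.prod (isOpen_Ioo.prod isOpen_Ioo)
  have hmem : ((r₀, r₀, Real.pi) : ℝ × ℝ × ℝ) ∈ S := by
    refine ⟨⟨h0, h0'⟩, ⟨h0, h0'⟩, ?_, ?_⟩ <;> linarith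
  rw [eventually_nhdsWithin_iff]
  filter_upwards [hopen.mem_nhds hmem] with p hp hpne
  obtain ⟨hp1, hp2, hp3⟩ := hp
  have hpne' : p ≠ ((r₀, r₀, Real.pi) : ℝ × ℝ × ℝ) := hpne
  have hc : Real.cos p.2.2 ≤ 0 :=
    Real.cos_nonpos_of_pi_div_two_le_of_le hp3.1.le hp3.2.le
  have hstr : ¬(p.1 = r₀ ∧ p.2.1 = r₀) ∨ -1 < Real.cos p.2.2 := by
    by_cases hθ : p.2.2 = Real.pi
    · left
      rintro ⟨ha, hb⟩
      exact hpne' (Prod.ext ha (Prod.ext hb hθ))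
    · right
      rcases lt_or_eq_of_le (Real.neg_one_le_cos p.2.2) with h | h
      · exact h
      · exfalso
        apply hθ
        have hcos1 : Real.cos (p.2.2 - Real.pi) = 1 := by
          rw [Real.cos_sub, Real.cos_pi, Real.sin_pi, ← h]; ring
        have hb1 : -(2 * Real.pi) < p.2.2 - Real.pi := by linarith [hp3.1]
        have hb2 : p.2.2 - Real.pi < 2 * Real.pi := by linarith [hp3.2]
        have := (Real.cos_eq_one_iff_of_lt_of_lt hb1 hb2).mp hcos1
        linarith
  exact key_ineq Ω₀ Φ r₀ hΩ₀ hΦ h0 h0' hkey p.1 p.2.1 p.2.2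
    hp1.1 hp1.2 hp2.1 hp2.2 hc hstr
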